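/- Let G be a group with a finite generating set X. If (G,X) has the basepoint loop shortening property, then (G,X) is almost convex. -/

import Mathlib

/-! Basic notions for a group `G` with a generating set `X`:
words over `X ∪ X⁻¹`, the word metric, paths, loops and fellow traveling. -/

namespace LoopShortening

variable {G : Type*} [Group G]

/-- `w` is a word over `X ∪ X⁻¹`: every letter of `w` lies in `X ∪ X⁻¹`. -/
def IsWord (X : Set G) (w : List G) : Prop := ∀ x ∈ w, x ∈ X ∨ x⁻¹ ∈ X

/-- The word metric with respect to `X`: `wdist X g h` is the least `n` such that
`g⁻¹h` is a product of `n` elements of `X ∪ X⁻¹`. -/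
noncomputable def wdist (X : Set G) (g h : G) : ℕ :=
  sInf {n : ℕ | ∃ l : List G, IsWord X l ∧ l.length = n ∧ g * l.prod = h}

/-- The point at time `t ∈ ℕ` along the path based at `g₀` labelled by the word `w`;
for `t ≥ |w|` this is the endpoint of the path. -/
def pathAt (g₀ : G) (w : List G) (t : ℕ) : G := g₀ * (w.take t).prod

/-- The word `w` labels a loop (its evaluation in `G` is the identity, so the
path it labels ends where it starts). -/
def IsLoop (w : List G) : Prop := w.prod = 1

/-- The paths based at `g₀` and `h₀` labelled by `w` and `u` synchronously
`k`-fellow travel. -/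
def SyncFellow (X : Set G) (k : ℕ) (g₀ : G) (w : List G) (h₀ : G) (u : List G) : Prop :=
  ∀ t : ℕ, wdist X (pathAt g₀ w t) (pathAt h₀ u t) ≤ k

/-- The paths based at `g₀` and `h₀` labelled by `w` and `u` asynchronously
`k`-fellow travel: there is a nondecreasing unbounded reparameterization `φ`. -/
def AsyncFellow (X : Set G) (k : ℕ) (g₀ : G) (w : List G) (h₀ : G) (u : List G) : Prop :=
  ∃ φ : ℕ → ℕ, Monotone φ ∧ (∀ m : ℕ, ∃ t : ℕ, m ≤ φ t) ∧
    ∀ t : ℕ, wdist X (pathAt g₀ w t) (pathAt h₀ u (φ t)) ≤ k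

/-- `(G,X)` has the (synchronous) basepoint loop shortening property. -/
def BasepointLSP (X : Set G) : Prop :=
  ∃ k : ℕ, 0 < k ∧ ∀ (g₀ : G) (w : List G), IsWord X w → IsLoop w → w ≠ [] →
    ∃ u : List G, IsWord X u ∧ IsLoop u ∧ u.length < w.length ∧
      SyncFellow X k g₀ w g₀ u

/-- `(G,X)` is almost convex: there is a constant `C` such that for every `N ∈ ℕ` and
all `g, h ∈ G` with `d(1,g) ≤ N`, `d(1,h) ≤ N` and `d(g,h) ≤ 2`, there is a path from
`g` to `h` of length at most `C` each of whose vertices lies within distance `N` of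
the identity. -/
def AlmostConvex (X : Set G) : Prop :=
  ∃ C : ℕ, ∀ (N : ℕ) (g h : G), wdist X 1 g ≤ N → wdist X 1 h ≤ N → wdist X g h ≤ 2 →
    ∃ p : List G, IsWord X p ∧ g * p.prod = h ∧ p.length ≤ C ∧
      ∀ t : ℕ, wdist X 1 (pathAt g p t) ≤ N

/-! ### Auxiliary lemmas -/

section Aux

variable {X : Set G}

lemma isWord_nil : IsWord X ([] : List G) := by intro x hx; simp at hx

lemma IsWord.append {p q : List G} (hp : IsWord X p) (hq : IsWord X q) :
    IsWord X (p ++ q) := by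
  intro x hx
  rcases List.mem_append.mp hx with h | h
  · exact hp x h
  · exact hq x h

lemma IsWord.take {p : List G} (hp : IsWord X p) (n : ℕ) : IsWord X (p.take n) :=
  fun x hx => hp x (List.mem_of_mem_take hx)

lemma IsWord.drop {p : List G} (hp : IsWord X p) (n : ℕ) : IsWord X (p.drop n) :=
  fun x hx => hp x (List.mem_of_mem_drop hx)

lemma IsWord.invRev {p : List G} (hp : IsWord X p) :
    IsWord X ((p.map fun x => x⁻¹).reverse) := by
  intro x hx
  rw [List.mem_reverse, List.mem_map] at hx
  rcases hx with ⟨y, hy, rfl⟩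
  rcases hp y hy with h | h
  · right; simpa using h
  · left; exact h

/-- Every group element is the product of a word over `X ∪ X⁻¹`. -/
lemma exists_word_prod (hgen : Subgroup.closure X = ⊤) (z : G) :
    ∃ l : List G, IsWord X l ∧ l.prod = z := by
  have hz : z ∈ Subgroup.closure X := by rw [hgen]; trivial
  induction hz using Subgroup.closure_induction with
  | mem x hx => exact ⟨[x], by intro y hy; simp at hy; subst hy; exact Or.inl hx, by simp⟩
  | one => exact ⟨[], isWord_nil, by simp⟩
  | mul x y _ _ ihx ihy =>
      rcases ihx with ⟨l₁, hl₁, rfl⟩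
      rcases ihy with ⟨l₂, hl₂, rfl⟩
      exact ⟨l₁ ++ l₂, hl₁.append hl₂, by simp⟩
  | inv x _ ih =>
      rcases ih with ⟨l, hl, rfl⟩
      exact ⟨(l.map fun x => x⁻¹).reverse, hl.invRev, (List.prod_inv_reverse l).symm⟩

lemma wdist_set_nonempty (hgen : Subgroup.closure X = ⊤) (g h : G) :
    {n : ℕ | ∃ l : List G, IsWord X l ∧ l.length = n ∧ g * l.prod = h}.Nonempty := by
  rcases exists_word_prod hgen (g⁻¹ * h) with ⟨l, hl, hprod⟩
  exact ⟨l.length, l, hl, rfl, by rw [hprod]; group⟩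

lemma wdist_le {g h : G} {l : List G} (hl : IsWord X l) (he : g * l.prod = h) :
    wdist X g h ≤ l.length :=
  Nat.sInf_le ⟨l, hl, rfl, he⟩

/-- A geodesic word realizing the word metric. -/
lemma exists_min_word (hgen : Subgroup.closure X = ⊤) (g h : G) :
    ∃ l : List G, IsWord X l ∧ l.length = wdist X g h ∧ g * l.prod = h :=
  Nat.sInf_mem (wdist_set_nonempty hgen g h)

lemma wdist_symm_le (hgen : Subgroup.closure X = ⊤) (g h : G) :
    wdist X h g ≤ wdist X g h := by
  rcases exists_min_word hgen g h with ⟨l, hl, hlen, he⟩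
  have : h * ((l.map fun x => x⁻¹).reverse).prod = g := by
    rw [← List.prod_inv_reverse, ← he]; group
  calc wdist X h g ≤ ((l.map fun x => x⁻¹).reverse).length := wdist_le hl.invRev this
    _ = wdist X g h := by simpa using hlen

lemma wdist_symm (hgen : Subgroup.closure X = ⊤) (g h : G) :
    wdist X g h = wdist X h g :=
  le_antisymm (wdist_symm_le hgen h g) (wdist_symm_le hgen g h)

lemma wdist_triangle (hgen : Subgroup.closure X = ⊤) (g h i : G) :
    wdist X g i ≤ wdist X g h + wdist X h i := by
  rcases exists_min_word hgen g h with ⟨l₁, hl₁, hlen₁, he₁⟩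
  rcases exists_min_word hgen h i with ⟨l₂, hl₂, hlen₂, he₂⟩
  have : g * (l₁ ++ l₂).prod = i := by rw [List.prod_append, ← mul_assoc, he₁, he₂]
  calc wdist X g i ≤ (l₁ ++ l₂).length := wdist_le (hl₁.append hl₂) this
    _ = wdist X g h + wdist X h i := by rw [List.length_append, hlen₁, hlen₂]

lemma wdist_self (g : G) : wdist X g g = 0 :=
  Nat.le_zero.mp (wdist_le isWord_nil (by simp))

lemma pathAt_zero (g : G) (w : List G) : pathAt g w 0 = g := by simp [pathAt]

lemma pathAt_of_le (g : G) {w : List G} {t : ℕ} (h : w.length ≤ t) :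
    pathAt g w t = g * w.prod := by
  rw [pathAt, List.take_of_length_le h]

lemma pathAt_append (g : G) (p q : List G) (t : ℕ) :
    pathAt g (p ++ q) t = pathAt (pathAt g p t) q (t - p.length) := by
  simp only [pathAt, List.take_append, List.prod_append, mul_assoc]

/-- Points along the path of a word are within the word-length of the end point. -/
lemma wdist_pathAt_end (hgen : Subgroup.closure X = ⊤) {g h : G} {p : List G}
    (hp : IsWord X p) (he : g * p.prod = h) (t : ℕ) :
    wdist X (pathAt g p t) h ≤ p.length - t := by
  have hprod : pathAt g p t * (p.drop t).prod = h := by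
    rw [pathAt, mul_assoc, ← List.prod_append, List.take_append_drop, he]
  calc wdist X (pathAt g p t) h ≤ (p.drop t).length := wdist_le (hp.drop t) hprod
    _ = p.length - t := List.length_drop

/-- Points along the path of a word are within `t` of the starting point. -/
lemma wdist_pathAt_start {g : G} {p : List G} (hp : IsWord X p) (t : ℕ) :
    wdist X g (pathAt g p t) ≤ t := by
  calc wdist X g (pathAt g p t) ≤ (p.take t).length := wdist_le (hp.take t) rfl
    _ ≤ t := by simp

/-- `GP N g h m` : there is a path of length at most `m` from `g` to `h` staying
in the ball of radius `N`. -/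
def GP (X : Set G) (N : ℕ) (g h : G) (m : ℕ) : Prop :=
  ∃ p : List G, IsWord X p ∧ g * p.prod = h ∧ p.length ≤ m ∧
    ∀ t : ℕ, wdist X 1 (pathAt g p t) ≤ N

lemma GP.trans {N : ℕ} {g h i : G} {m₁ m₂ : ℕ}
    (h₁ : GP X N g h m₁) (h₂ : GP X N h i m₂) : GP X N g i (m₁ + m₂) := by
  rcases h₁ with ⟨p, hp, hep, hlp, hdp⟩
  rcases h₂ with ⟨q, hq, heq, hlq, hdq⟩
  refine ⟨p ++ q, hp.append hq, ?_, ?_, ?_⟩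
  · rw [List.prod_append, ← mul_assoc, hep, heq]
  · rw [List.length_append]; omega
  · intro t
    rw [pathAt_append]
    rcases le_or_gt p.length t with hle | hlt
    · rw [pathAt_of_le g hle, hep]; exact hdq _
    · have : t - p.length = 0 := by omega
      rw [this, pathAt_zero]; exact hdp t

lemma GP.mono {N : ℕ} {g h : G} {m m' : ℕ} (hgp : GP X N g h m) (hm : m ≤ m') :
    GP X N g h m' := by
  rcases hgp with ⟨p, hp, he, hl, hd⟩
  exact ⟨p, hp, he, hl.trans hm, hd⟩

/-- Geodesic piece, with depth controlled via the end point. -/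
lemma gp_back (hgen : Subgroup.closure X = ⊤) {N : ℕ} {x y : G} {e m : ℕ}
    (hd : wdist X x y ≤ m) (hy : wdist X 1 y ≤ e) (hem : e + m ≤ N) :
    GP X N x y m := by
  rcases exists_min_word hgen x y with ⟨p, hp, hlen, he⟩
  refine ⟨p, hp, he, by omega, fun t => ?_⟩
  calc wdist X 1 (pathAt x p t)
      ≤ wdist X 1 y + wdist X y (pathAt x p t) := wdist_triangle hgen _ _ _
    _ ≤ e + m := by
        have h1 : wdist X (pathAt x p t) y ≤ p.length - t := wdist_pathAt_end hgen hp he t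
        have h2 : wdist X y (pathAt x p t) ≤ p.length - t := by
          rw [wdist_symm hgen]; exact h1
        omega
    _ ≤ N := hem

/-- Geodesic piece, with depth controlled via the starting point. -/
lemma gp_fwd (hgen : Subgroup.closure X = ⊤) {N : ℕ} {x y : G} {e m : ℕ}
    (hd : wdist X x y ≤ m) (hx : wdist X 1 x ≤ e) (hem : e + m ≤ N) :
    GP X N x y m := by
  rcases exists_min_word hgen x y with ⟨p, hp, hlen, he⟩
  refine ⟨p, hp, he, by omega, fun t => ?_⟩
  calc wdist X 1 (pathAt x p t)
      ≤ wdist X 1 x + wdist X x (pathAt x p t) := wdist_triangle hgen _ _ _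
    _ ≤ e + m := by
        have h1 : wdist X x (pathAt x p t) ≤ t := wdist_pathAt_start hp t
        have h1' : wdist X x (pathAt x p t) ≤ p.length := by
          calc wdist X x (pathAt x p t) ≤ (p.take t).length := wdist_le (hp.take t) rfl
            _ ≤ p.length := by simp
        omega
    _ ≤ N := hem

end Aux

/-- If `(G,X)` has the basepoint loop shortening property then `(G,X)` is
almost convex. -/
theorem basepointLSP_almostConvex {G : Type*} [Group G] (X : Set G)
    (hfin : X.Finite) (hgen : Subgroup.closure X = ⊤)
    (h : BasepointLSP X) : AlmostConvex X := by
  rcases h with ⟨k, hk, hlsp⟩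
  refine ⟨6 * k + 2, fun N g h hgN hhN hgh => ?_⟩
  -- exact distances
  set a := wdist X 1 g with ha
  set b := wdist X 1 h with hb
  set c := wdist X g h with hc
  -- geodesic words
  obtain ⟨γ, hγw, hγl, hγe⟩ := exists_min_word hgen 1 g
  obtain ⟨β, hβw, hβl, hβe⟩ := exists_min_word hgen g h
  obtain ⟨δ, hδw, hδl, hδe⟩ := exists_min_word hgen h 1
  have hδl' : δ.length = b := by rw [hδl, ← wdist_symm hgen]
  rw [one_mul] at hγe
  -- the loop `w = γ ++ β ++ δ` based at `1`
  set w : List G := γ ++ (β ++ δ) with hw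
  have hww : IsWord X w := hγw.append (hβw.append hδw)
  have hwprod : w.prod = 1 := by
    rw [hw, List.prod_append, List.prod_append, hγe, ← mul_assoc, hβe, hδe]
  have hwlen : w.length = a + (c + b) := by
    rw [hw, List.length_append, List.length_append, hγl, hβl, hδl']
  -- trivial case : the loop is empty
  by_cases hemp : w = []
  · have hγnil : γ = [] := by
      rcases List.append_eq_nil_iff.mp hemp with ⟨h1, _⟩; exact h1
    have hβnil : β = [] := by
      rcases List.append_eq_nil_iff.mp hemp with ⟨_, h2⟩
      rcases List.append_eq_nil_iff.mp h2 with ⟨h3, _⟩; exact h3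
    have hg1 : g = 1 := by rw [← hγe, hγnil]; simp
    have hh1 : h = g := by rw [← hβe, hβnil]; simp
    refine ⟨[], isWord_nil, by simp [hh1], by simp, fun t => ?_⟩
    have : pathAt g [] t = g := by simp [pathAt]
    rw [this, hg1, wdist_self]; omega
  -- apply loop shortening once
  obtain ⟨u, huw, hul, hulen, hfellow⟩ := hlsp 1 w hww hwprod hemp
  rw [hwlen] at hulen
  -- every point of `u` lies in the ball of radius `N`
  have hudepth : ∀ t : ℕ, wdist X 1 (pathAt 1 u t) ≤ N := by
    intro t
    rcases le_or_gt t N with hle | hlt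
    · calc wdist X 1 (pathAt 1 u t) ≤ t := wdist_pathAt_start huw t
        _ ≤ N := hle
    · have h1 : wdist X (pathAt 1 u t) 1 ≤ u.length - t :=
        wdist_pathAt_end hgen huw (by rw [one_mul]; exact hul) t
      rw [wdist_symm hgen]
      have : u.length - t ≤ N := by
        have hc2 : c ≤ 2 := hgh
        omega
      omega
  -- the dive depths on either side
  set s : ℕ := min a k with hs
  set s' : ℕ := min b k with hs'
  set T : ℕ := a + c + s' with hT
  -- special points
  set g₁ : G := (γ.take (a - s)).prod with hg₁
  set y₁ : G := pathAt 1 u (a - s) with hy₁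
  set y₂ : G := pathAt 1 u T with hy₂
  set h₁ : G := pathAt 1 w T with hh₁
  -- identifications of points on `w`
  have hwg₁ : pathAt 1 w (a - s) = g₁ := by
    rw [pathAt, one_mul, hw, List.take_append]
    have : a - s - γ.length = 0 := by rw [hγl]; omega
    rw [this]
    simp [hg₁]
  have hwh₁ : h₁ = h * (δ.take s').prod := by
    rw [hh₁, pathAt, one_mul, hw, List.take_append,
      List.take_append]
    have h1 : γ.take T = γ := List.take_of_length_le (by rw [hγl]; omega)
    have h2 : β.take (T - γ.length) = β := List.take_of_length_le (by rw [hβl, hγl]; omega)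
    have h3 : T - γ.length - β.length = s' := by rw [hγl, hβl]; omega
    rw [h1, h2, h3, List.prod_append, List.prod_append, hγe, ← mul_assoc, hβe]
  -- Piece 1a : from g down along γ to g₁
  have hP1a : GP X N g g₁ s := by
    apply gp_back hgen (e := a - s)
    · have : g₁ * (γ.drop (a - s)).prod = g := by
        rw [hg₁, ← List.prod_append, List.take_append_drop, hγe]
      have h1 : wdist X g₁ g ≤ γ.length - (a - s) := by
        calc wdist X g₁ g ≤ (γ.drop (a - s)).length := wdist_le (hγw.drop _) this
          _ = γ.length - (a - s) := List.length_drop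
      rw [wdist_symm hgen]
      rw [hγl] at h1
      omega
    · calc wdist X 1 g₁ ≤ (γ.take (a - s)).length := wdist_le (hγw.take _) (by rw [one_mul])
        _ ≤ a - s := by rw [List.length_take]; omega
    · omega
  -- Piece 1b : hop from g₁ over to y₁ on u
  have hP1b : GP X N g₁ y₁ k := by
    rcases le_or_gt k a with hka | hak
    · -- a ≥ k, s = k
      apply gp_back hgen (e := a - s)
      · rw [← hwg₁]; exact hfellow (a - s)
      · calc wdist X 1 y₁ ≤ (u.take (a - s)).length :=
              wdist_le (huw.take _) (by rw [hy₁, pathAt, one_mul])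
          _ ≤ a - s := by rw [List.length_take]; omega
      · omega
    · -- a < k, so s = a and g₁ = y₁ = 1
      have hs0 : a - s = 0 := by omega
      have hg₁1 : g₁ = 1 := by rw [hg₁, hs0]; simp
      have hy₁1 : y₁ = 1 := by rw [hy₁, hs0, pathAt_zero]
      refine (gp_back hgen (e := 0) (m := 0) ?_ ?_ ?_).mono (Nat.zero_le k) <;>
        simp [hg₁1, hy₁1, wdist_self]
  -- Piece 2 : along u from y₁ to y₂
  have hP2 : GP X N y₁ y₂ (c + s + s') := by
    set v : List G := (u.drop (a - s)).take (c + s + s') with hv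
    have hvw : IsWord X v := (huw.drop _).take _
    have key : ∀ j : ℕ, y₁ * ((u.drop (a - s)).take j).prod = pathAt 1 u (a - s + j) := by
      intro j
      rw [hy₁, pathAt, pathAt, one_mul, one_mul, ← List.prod_append, ← List.take_add]
    refine ⟨v, hvw, ?_, ?_, ?_⟩
    · rw [hv, key (c + s + s')]
      have : a - s + (c + s + s') = T := by omega
      rw [this, hy₂]
    · rw [hv, List.length_take]; omega
    · intro t
      have hvt : v.take t = (u.drop (a - s)).take (min t (c + s + s')) := by
        rw [hv, List.take_take]
      have : pathAt y₁ v t = pathAt 1 u (a - s + min t (c + s + s')) := by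
        rw [pathAt, hvt, key]
      rw [this]
      exact hudepth _
  -- Piece 3 : hop from y₂ back to h₁ on w
  have hP3 : GP X N y₂ h₁ k := by
    rcases le_or_gt k b with hkb | hbk
    · -- b ≥ k, s' = k
      apply gp_back hgen (e := b - s')
      · rw [hy₂, hh₁, wdist_symm hgen]; exact hfellow T
      · -- depth of h₁ : continue along δ to 1
        have : h₁ * (δ.drop s').prod = 1 := by
          rw [hwh₁, mul_assoc, ← List.prod_append, List.take_append_drop, hδe]
        have h1 : wdist X h₁ 1 ≤ δ.length - s' := by
          calc wdist X h₁ 1 ≤ (δ.drop s').length := wdist_le (hδw.drop _) this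
            _ = δ.length - s' := List.length_drop
        rw [wdist_symm hgen]
        rw [hδl'] at h1
        omega
      · omega
    · -- b < k, so s' = b and y₂ = h₁ = 1
      have hTw : w.length ≤ T := by rw [hwlen]; omega
      have hTu : u.length ≤ T := by omega
      have hy₂1 : y₂ = 1 := by rw [hy₂, pathAt_of_le _ hTu, one_mul, hul]
      have hh₁1 : h₁ = 1 := by rw [hh₁, pathAt_of_le _ hTw, one_mul, hwprod]
      refine (gp_back hgen (e := 0) (m := 0) ?_ ?_ ?_).mono (Nat.zero_le k) <;>
        simp [hy₂1, hh₁1, wdist_self]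
  -- Piece 4 : from h₁ up along δ to h
  have hP4 : GP X N h₁ h s' := by
    apply gp_fwd hgen (e := b - s')
    · have h1 : wdist X h h₁ ≤ (δ.take s').length := wdist_le (hδw.take _) hwh₁.symm
      rw [wdist_symm hgen]
      rw [List.length_take, hδl'] at h1
      omega
    · -- depth of h₁ again
      have : h₁ * (δ.drop s').prod = 1 := by
        rw [hwh₁, mul_assoc, ← List.prod_append, List.take_append_drop, hδe]
      have h1 : wdist X h₁ 1 ≤ δ.length - s' := by
        calc wdist X h₁ 1 ≤ (δ.drop s').length := wdist_le (hδw.drop _) this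
          _ = δ.length - s' := List.length_drop
      rw [wdist_symm hgen]
      rw [hδl'] at h1
      omega
    · omega
  -- assemble
  have htot : GP X N g h (s + k + (c + s + s') + k + s') :=
    (((hP1a.trans hP1b).trans hP2).trans hP3).trans hP4
  have hfin' : GP X N g h (6 * k + 2) := htot.mono (by have hc2 : c ≤ 2 := hgh; omega)
  exact hfin'

end LoopShortening
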